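/- For every α > 0 and every λ > 0, the function λ ↦ ψ(α, λ) = e^{-αλ} · ∑_{k=0}^∞ (λ^k/k!)^α is differentiable at λ with derivative ψ'_λ(α, λ) = α e^{-αλ} · ∑_{k=0}^∞ (k − λ) · λ^{αk − 1}/(k!)^α. -/

import Mathlib

open Real Filter Topology

lemma aux_rpow_eq {α : ℝ} {x : ℝ} (hx : 0 < x) (k : ℕ) :
    (x ^ k / (Nat.factorial k : ℝ)) ^ α = x ^ (α * (k:ℝ)) / (Nat.factorial k : ℝ) ^ α := by
  rw [Real.div_rpow (by positivity) (by positivity), ← Real.rpow_natCast x k,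
    ← Real.rpow_mul hx.le, mul_comm (k:ℝ) α]

lemma aux1 {α : ℝ} (hα : 0 < α) {s : ℝ} (hs : 0 < s) :
    Summable (fun k : ℕ => s ^ k / (Nat.factorial k : ℝ) ^ α) := by
  have hfac : ∀ k : ℕ, (0:ℝ) < (Nat.factorial k : ℝ) ^ α := fun k =>
    Real.rpow_pos_of_pos (by exact_mod_cast Nat.factorial_pos k) α
  apply summable_of_ratio_test_tendsto_lt_one (l := 0) zero_lt_one
  · exact Eventually.of_forall fun k => by positivity
  · have key : ∀ k : ℕ, ‖s ^ (k+1) / (Nat.factorial (k+1) : ℝ) ^ α‖ /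
        ‖s ^ k / (Nat.factorial k : ℝ) ^ α‖ = s * ((k:ℝ)+1) ^ (-α) := by
      intro k
      have h1 : (0:ℝ) < (k:ℝ) + 1 := by positivity
      have h2 : ((Nat.factorial (k+1) : ℝ)) ^ α = ((k:ℝ)+1) ^ α * (Nat.factorial k : ℝ) ^ α := by
        rw [← Real.mul_rpow h1.le (by positivity)]
        congr 1
        push_cast [Nat.factorial_succ]
        ring
      rw [Real.norm_of_nonneg (by positivity), Real.norm_of_nonneg (by positivity), h2,
        Real.rpow_neg h1.le]
      have h3 := (hfac k).ne'
      have h4 : ((k:ℝ)+1) ^ α ≠ 0 := by positivity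
      field_simp
      ring
    simp_rw [key]
    have : Tendsto (fun k : ℕ => s * ((k:ℝ)+1) ^ (-α)) atTop (𝓝 (s * 0)) := by
      apply Tendsto.const_mul
      exact (tendsto_rpow_neg_atTop hα).comp
        (tendsto_atTop_add_const_right _ 1 tendsto_natCast_atTop_atTop)
    simpa using this

lemma aux2 {α : ℝ} (hα : 0 < α) {s : ℝ} (hs : 0 < s) :
    Summable (fun k : ℕ => (k:ℝ) * s ^ k / (Nat.factorial k : ℝ) ^ α) := by
  refine Summable.of_nonneg_of_le (fun k => by positivity) (fun k => ?_) (aux1 hα (s := 2*s) (by positivity))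
  have hfac : (0:ℝ) < (Nat.factorial k : ℝ) ^ α :=
    Real.rpow_pos_of_pos (by exact_mod_cast Nat.factorial_pos k) α
  have hk2 : (k:ℝ) ≤ 2 ^ k := by
    exact_mod_cast (Nat.lt_two_pow_self (n := k)).le
  have : (k:ℝ) * s ^ k ≤ (2*s) ^ k := by
    rw [mul_pow]
    exact mul_le_mul_of_nonneg_right hk2 (by positivity)
  gcongr

theorem psi_hasDerivAt (α : ℝ) (hα : 0 < α) (l : ℝ) (hl : 0 < l) :
    HasDerivAt (fun x : ℝ =>
        Real.exp (-α * x) * ∑' k : ℕ, (x ^ k / (Nat.factorial k : ℝ)) ^ α)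
      (α * Real.exp (-α * l) *
        ∑' k : ℕ, ((k : ℝ) - l) * l ^ (α * (k : ℝ) - 1) / (Nat.factorial k : ℝ) ^ α)
      l := by
  have hso : IsOpen (Set.Ioo (l/2) (2*l)) := isOpen_Ioo
  have hls : l ∈ Set.Ioo (l/2) (2*l) := ⟨by linarith, by linarith⟩
  set F : ℕ → ℝ → ℝ := fun k x => (x ^ k / (Nat.factorial k : ℝ)) ^ α with hF_def
  set F' : ℕ → ℝ → ℝ :=
    fun k x => α * (k:ℝ) * x ^ (α * (k:ℝ) - 1) / (Nat.factorial k : ℝ) ^ α with hF'_def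
  have hposx : ∀ x ∈ Set.Ioo (l/2) (2*l), 0 < x := fun x hx => lt_trans (by linarith) hx.1
  -- termwise derivative
  have hderiv : ∀ (k : ℕ), ∀ x ∈ Set.Ioo (l/2) (2*l), HasDerivAt (F k) (F' k x) x := by
    intro k x hx
    have hx0 : 0 < x := hposx x hx
    match k with
    | 0 =>
      have : F 0 = fun _ : ℝ => (1:ℝ) := by
        funext y; simp [hF_def]
      rw [this]
      have : F' 0 x = 0 := by simp [hF'_def]
      rw [this]
      exact hasDerivAt_const x 1
    | (n+1) =>
      set K : ℝ := (Nat.factorial (n+1) : ℝ) with hK_def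
      have hK : 0 < K := by positivity
      have hbase : (0:ℝ) < x ^ (n+1) / K := by positivity
      have h1 : HasDerivAt (fun y : ℝ => y ^ (n+1) / K)
          ((↑(n+1) * x ^ n) / K) x := (hasDerivAt_pow (n+1) x).div_const K
      have h2 := h1.rpow_const (p := α) (Or.inl hbase.ne')
      convert h2 using 1
      -- value equality
      have e1 : (x ^ (n+1) / K) ^ (α - 1) = x ^ (((n:ℝ)+1) * (α-1)) / K ^ (α - 1) := by
        rw [Real.div_rpow (by positivity) hK.le, ← Real.rpow_natCast x (n+1),
          ← Real.rpow_mul hx0.le]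
        push_cast
        ring_nf
      have e2 : x ^ n = x ^ (n:ℝ) := (Real.rpow_natCast x n).symm
      have e3 : x ^ (n:ℝ) * x ^ (((n:ℝ)+1) * (α-1)) = x ^ (α * ((n:ℝ)+1) - 1) := by
        rw [← Real.rpow_add hx0]; congr 1; ring
      have e4 : K * K ^ (α - 1) = K ^ α := by
        nth_rewrite 1 [← Real.rpow_one K]
        rw [← Real.rpow_add hK]; congr 1; ring
      rw [hF'_def]
      simp only []
      rw [e1, e2]
      rw [div_mul_eq_mul_div, div_mul_div_comm]
      rw [show (↑(n+1) : ℝ) * x ^ (n:ℝ) * α * x ^ (((n:ℝ)+1) * (α-1))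
            = α * (↑(n+1):ℝ) * (x ^ (n:ℝ) * x ^ (((n:ℝ)+1) * (α-1))) by ring, e3, e4]
      push_cast
      ring
  -- uniform bound for the derivative series
  set u : ℕ → ℝ := fun k => (2*α/l) * (2*(2*l) ^ α) ^ k / (Nat.factorial k : ℝ) ^ α with hu_def
  have hu : Summable u := by
    have := (aux1 hα (s := 2*(2*l) ^ α) (by positivity)).mul_left (2*α/l)
    simpa [hu_def, mul_div_assoc] using this
  have hbound : ∀ (k : ℕ), ∀ x ∈ Set.Ioo (l/2) (2*l), ‖F' k x‖ ≤ u k := by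
    intro k x hx
    have hx0 : 0 < x := hposx x hx
    have hfac : (0:ℝ) < (Nat.factorial k : ℝ) ^ α :=
      Real.rpow_pos_of_pos (by exact_mod_cast Nat.factorial_pos k) α
    rw [Real.norm_of_nonneg (by positivity)]
    have key : x ^ (α * (k:ℝ) - 1) ≤ (2*l) ^ (α * (k:ℝ)) / (l/2) := by
      rw [Real.rpow_sub hx0, Real.rpow_one]
      apply div_le_div₀ (by positivity) _ (by linarith) hx.1.le
      exact Real.rpow_le_rpow hx0.le hx.2.le (by positivity)
    have key2 : (2*l) ^ (α * (k:ℝ)) = ((2*l) ^ α) ^ k := by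
      rw [Real.rpow_mul (by linarith), Real.rpow_natCast]
    have hk2 : (k:ℝ) ≤ 2 ^ k := by exact_mod_cast (Nat.lt_two_pow_self (n := k)).le
    have num_le : α * (k:ℝ) * x ^ (α * (k:ℝ) - 1) ≤ (2*α/l) * (2*(2*l) ^ α) ^ k := by
      calc α * (k:ℝ) * x ^ (α * (k:ℝ) - 1)
          ≤ α * (k:ℝ) * ((2*l) ^ (α * (k:ℝ)) / (l/2)) := by
            apply mul_le_mul_of_nonneg_left key (by positivity)
        _ = (2*α/l) * ((k:ℝ) * ((2*l) ^ α) ^ k) := by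
            rw [key2]; field_simp
        _ ≤ (2*α/l) * (2 ^ k * ((2*l) ^ α) ^ k) := by
            apply mul_le_mul_of_nonneg_left _ (by positivity)
            exact mul_le_mul_of_nonneg_right hk2 (by positivity)
        _ = (2*α/l) * (2*(2*l) ^ α) ^ k := by rw [mul_pow]
    simp only [hF'_def, hu_def]
    exact (div_le_div_iff_of_pos_right hfac).2 num_le
  -- summability of the series at points of the interval
  have hsum : ∀ x ∈ Set.Ioo (l/2) (2*l), Summable (fun k : ℕ => F k x) := by
    intro x hx
    have hx0 : 0 < x := hposx x hx
    have : (fun k : ℕ => F k x) = fun k : ℕ => (x ^ α) ^ k / (Nat.factorial k : ℝ) ^ α := by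
      funext k
      rw [hF_def]
      simp only []
      rw [aux_rpow_eq hx0, Real.rpow_mul hx0.le, Real.rpow_natCast]
    rw [this]
    exact aux1 hα (Real.rpow_pos_of_pos hx0 α)
  -- derivative of the sum
  have hS : HasDerivAt (fun x : ℝ => ∑' k : ℕ, F k x) (∑' k : ℕ, F' k l) l := by
    apply hasDerivAt_of_tendstoUniformlyOn hso (tendstoUniformlyOn_tsum hu hbound)
      _ (fun x hx => (hsum x hx).hasSum) hls
    exact Eventually.of_forall fun t x hx => HasDerivAt.fun_sum fun k _ => hderiv k x hx
  -- derivative of the exponential factor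
  have hE : HasDerivAt (fun x : ℝ => Real.exp (-α * x)) (Real.exp (-α * l) * (-α)) l := by
    have : HasDerivAt (fun x : ℝ => -α * x) (-α) l := by
      simpa using (hasDerivAt_id l).const_mul (-α)
    exact this.exp
  have hmain := hE.mul hS
  convert hmain using 1
  · rfl
  · rfl
  · rfl
  -- now the value identity
  set A : ℕ → ℝ := fun k => (k:ℝ) * l ^ (α * (k:ℝ) - 1) / (Nat.factorial k : ℝ) ^ α with hA_def
  set B : ℕ → ℝ := fun k => l ^ (α * (k:ℝ) - 1) / (Nat.factorial k : ℝ) ^ α with hB_def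
  have hlα : (0:ℝ) < l ^ α := Real.rpow_pos_of_pos hl α
  have hBsum : Summable B := by
    have : B = fun k : ℕ => (1/l) * ((l ^ α) ^ k / (Nat.factorial k : ℝ) ^ α) := by
      funext k
      rw [hB_def]
      simp only []
      rw [Real.rpow_sub hl, Real.rpow_one, Real.rpow_mul hl.le, Real.rpow_natCast]
      ring
    rw [this]
    exact (aux1 hα hlα).mul_left _
  have hAsum : Summable A := by
    have : A = fun k : ℕ => (1/l) * ((k:ℝ) * (l ^ α) ^ k / (Nat.factorial k : ℝ) ^ α) := by
      funext k
      rw [hA_def]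
      simp only []
      rw [Real.rpow_sub hl, Real.rpow_one, Real.rpow_mul hl.le, Real.rpow_natCast]
      ring
    rw [this]
    exact (aux2 hα hlα).mul_left _
  have eS : ∑' k : ℕ, F k l = l * ∑' k, B k := by
    rw [← tsum_mul_left]
    congr 1; funext k
    rw [hF_def, hB_def]
    simp only []
    rw [aux_rpow_eq hl, Real.rpow_sub hl, Real.rpow_one]
    field_simp
  have eS' : ∑' k : ℕ, F' k l = α * ∑' k, A k := by
    rw [← tsum_mul_left]
    congr 1; funext k
    rw [hF'_def, hA_def]
    simp only []
    ring
  have eT : ∑' k : ℕ, ((k : ℝ) - l) * l ^ (α * (k : ℝ) - 1) / (Nat.factorial k : ℝ) ^ α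
      = (∑' k, A k) - l * ∑' k, B k := by
    rw [← tsum_mul_left, ← Summable.tsum_sub hAsum (hBsum.mul_left l)]
    congr 1; funext k
    rw [hA_def, hB_def]
    simp only []
    ring
  rw [eS, eS', eT]
  ring
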